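/- Let a > 1 be a real number, t̃ > 0, g(t) = log(((a-1)t + 1)/((a-1)t̃ + 1)) / log a, and p(t) = ⌊g(t)⌋. Then liminf_{t→∞} (1/t)·(a^{p(t)}·t̃ + (a^{p(t)} - 1)/(a - 1)) ≥ 1/a. -/

import Mathlib

open Filter Real

/-- With g as above and p(t) = ⌊g(t)⌋,
liminf_{t→∞} (1/t)·(a^{p(t)}·t̃ + (a^{p(t)} - 1)/(a-1)) ≥ 1/a. -/
theorem stmt_4 (a ttil : ℝ) (ha : 1 < a) (ht : 0 < ttil)
    (g : ℝ → ℝ)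
    (hg : ∀ t > 0, g t = Real.log (((a - 1) * t + 1) / ((a - 1) * ttil + 1)) / Real.log a)
    (p : ℝ → ℤ) (hp : ∀ t, p t = ⌊g t⌋) :
    (1 / a) ≤ Filter.liminf (fun t : ℝ =>
      (1 / t) * (Real.exp ((p t : ℝ) * Real.log a) * ttil
        + (Real.exp ((p t : ℝ) * Real.log a) - 1) / (a - 1))) atTop := by
  have hla : 0 < Real.log a := Real.log_pos ha
  have ha0 : (0:ℝ) < a := by linarith
  have ha1 : (0:ℝ) < a - 1 := by linarith
  set c : ℝ := (a - 1) * ttil + 1 with hc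
  have hc0 : 0 < c := by positivity
  -- eventual pointwise bounds
  have key : ∀ᶠ t in atTop,
      1/a - 1/(a*t) ≤ (1 / t) * (Real.exp ((p t : ℝ) * Real.log a) * ttil
        + (Real.exp ((p t : ℝ) * Real.log a) - 1) / (a - 1))
      ∧ (1 / t) * (Real.exp ((p t : ℝ) * Real.log a) * ttil
        + (Real.exp ((p t : ℝ) * Real.log a) - 1) / (a - 1)) ≤ 1 := by
    filter_upwards [eventually_gt_atTop (0:ℝ)] with t ht0
    have hX : 0 < (a-1)*t + 1 := by positivity
    have hexp : Real.exp (g t * Real.log a) = ((a-1)*t+1)/c := by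
      rw [hg t ht0, div_mul_cancel₀ _ (ne_of_gt hla)]
      exact Real.exp_log (by positivity)
    have hpge : g t - 1 ≤ (p t : ℝ) := by
      rw [hp t]
      have := Int.sub_one_lt_floor (g t)
      linarith
    have hple : (p t : ℝ) ≤ g t := by
      rw [hp t]; exact Int.floor_le _
    set E : ℝ := Real.exp ((p t : ℝ) * Real.log a) with hE
    have hexpge : ((a-1)*t+1)/(c*a) ≤ E := by
      have h1 : Real.exp ((g t - 1) * Real.log a) = ((a-1)*t+1)/(c*a) := by
        rw [sub_mul, one_mul, Real.exp_sub, hexp, Real.exp_log ha0]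
        field_simp
      rw [← h1]
      exact Real.exp_le_exp.mpr (by nlinarith)
    have hexple : E ≤ ((a-1)*t+1)/c := by
      rw [← hexp, hE]
      exact Real.exp_le_exp.mpr (by nlinarith)
    have hXle : (a-1)*t+1 ≤ E * (c * a) := (div_le_iff₀ (by positivity)).mp hexpge
    have hXge : E * c ≤ (a-1)*t+1 := (le_div_iff₀ hc0).mp hexple
    have h2 : E * ttil + (E - 1)/(a-1) = (E * c - 1)/(a-1) := by
      field_simp
      ring
    constructor
    · have goal' : (t-1)/a ≤ E * ttil + (E - 1)/(a-1) := by
        rw [h2, div_le_div_iff₀ ha0 ha1]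
        nlinarith
      have h1 : 1/a - 1/(a*t) = (1/t) * ((t-1)/a) := by
        rw [div_mul_div_comm, one_mul, div_sub_div _ _ (ne_of_gt ha0) (by positivity),
          div_eq_div_iff (by positivity) (by positivity)]
        ring
      rw [h1]
      exact mul_le_mul_of_nonneg_left goal' (by positivity)
    · have goal' : E * ttil + (E - 1)/(a-1) ≤ t := by
        rw [h2, div_le_iff₀ ha1]
        nlinarith
      calc (1/t) * (E * ttil + (E - 1)/(a-1)) ≤ (1/t) * t :=
            mul_le_mul_of_nonneg_left goal' (by positivity)
        _ = 1 := by field_simp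
  have hten : Tendsto (fun t : ℝ => 1/a - 1/(a*t)) atTop (nhds (1/a)) := by
    have h0 : Tendsto (fun t : ℝ => a * t) atTop atTop :=
      tendsto_id.const_mul_atTop ha0
    have h2 : Tendsto (fun t : ℝ => 1/(a*t)) atTop (nhds 0) := by
      simpa only [one_div, Pi.inv_def] using h0.inv_tendsto_atTop
    simpa using tendsto_const_nhds.sub h2
  have hcb : IsCoboundedUnder (· ≥ ·) atTop (fun t : ℝ =>
      (1 / t) * (Real.exp ((p t : ℝ) * Real.log a) * ttil
        + (Real.exp ((p t : ℝ) * Real.log a) - 1) / (a - 1))) :=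
    isCoboundedUnder_ge_of_eventually_le atTop (key.mono fun t h => h.2)
  calc 1/a = liminf (fun t : ℝ => 1/a - 1/(a*t)) atTop := (hten.liminf_eq).symm
    _ ≤ _ := liminf_le_liminf (key.mono fun t h => h.1) hten.isBoundedUnder_ge hcb
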